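/- Let m ≥ 2 be an integer, c > 0 a real, κ = m c²/(m−1), τ = (κ+1)/(m κ), and γ_1, …, γ_m ≥ 0. Set x_i = κ γ_i² for 1 ≤ i ≤ m with sorted values x_{(1)} ≤ … ≤ x_{(m)}, and let g be the associated polynomial. Suppose θ < 0 satisfies g(θ) = 0. Then for every k ∈ {1, …, m}, |θ| ≥ θ(x_{(k)}, k), where θ(x, k) denotes the unique positive root of the quadratic h(θ'; x, k) = −(k−1)x − [ m − x + (m+1−k) τ x ] θ' + θ'²; in particular |θ| ≥ m. -/
import Mathlib


/-- `κ = m c² / (m − 1)`. -/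
noncomputable def kappa (m : ℕ) (c : ℝ) : ℝ := (m : ℝ) * c ^ 2 / ((m : ℝ) - 1)

/-- The polynomial
`g(θ) = −(m+θ) ∏ᵢ (κ γᵢ² − θ) + (κ + ((κ+1)/m) θ) Σᵢ γᵢ² ∏_{j≠i} (κ γⱼ² − θ)`. -/
noncomputable def gfun (m : ℕ) (c : ℝ) (γ : Fin m → ℝ) (θ : ℝ) : ℝ :=
  -((m : ℝ) + θ) * ∏ i, (kappa m c * γ i ^ 2 - θ) +
    (kappa m c + (kappa m c + 1) / (m : ℝ) * θ) *
      ∑ i, γ i ^ 2 * ∏ j ∈ Finset.univ.erase i, (kappa m c * γ j ^ 2 - θ)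

/-- The `i`-th smallest value (0-indexed) among `y_1, …, y_m`. -/
noncomputable def sortedVal (m : ℕ) (y : Fin m → ℝ) (i : Fin m) : ℝ := y (Tuple.sort y i)

/-- The quadratic `h(θ'; x, k) = −(k−1)x − [m − x + (m+1−k) τ x] θ' + θ'²`,
with `τ = (κ+1)/(m κ)`. -/
noncomputable def hquad (m : ℕ) (κ x : ℝ) (k : ℕ) (θ : ℝ) : ℝ :=
  -((k : ℝ) - 1) * x -
    ((m : ℝ) - x + ((m : ℝ) + 1 - (k : ℝ)) * ((κ + 1) / ((m : ℝ) * κ)) * x) * θ + θ ^ 2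

private lemma auxGt {κ a : ℝ} (hκ : 0 < κ) (h : κ + 1 ≤ a * κ) : 0 < a - 1 := by
  nlinarith

private lemma auxRootGe {b q t : ℝ} (h : t ^ 2 - b * t - q = 0) (hq : 0 ≤ q)
    (ht : 0 < t) : 0 ≤ t - b := by
  nlinarith

private lemma auxDiv {s p r : ℝ} (hs : 0 < s) (hp : 0 ≤ p) (hpr : p ≤ r) :
    p / (p + s) ≤ r / (r + s) := by
  rw [div_le_div_iff₀ (by linarith) (by linarith)]
  nlinarith

set_option maxHeartbeats 1000000 in
/-- Lemma S10(d) of the paper: any negative root `θ` of `g` satisfies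
`|θ| ≥ θ(x_{(k)}, k)` for every `k ∈ {1, …, m}`, where `θ(x,k)` is the unique positive
root of `h(·; x, k)` and `x_i = κ γ_i²`; in particular `|θ| ≥ m`. -/
theorem stmt14 (m : ℕ) (hm : 2 ≤ m) (c : ℝ) (hc : 0 < c)
    (γ : Fin m → ℝ) (hγ : ∀ i, 0 ≤ γ i)
    (θ : ℝ) (hθ : θ < 0) (hroot : gfun m c γ θ = 0) :
    (∀ k : ℕ, ∀ _hk1 : 1 ≤ k, ∀ _hk2 : k ≤ m,
      ∃ t : ℝ,
        (0 < t ∧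
          hquad m (kappa m c)
            (sortedVal m (fun i : Fin m => kappa m c * γ i ^ 2) ⟨k - 1, by omega⟩) k t = 0) ∧
        (∀ t' : ℝ, 0 < t' →
          hquad m (kappa m c)
            (sortedVal m (fun i : Fin m => kappa m c * γ i ^ 2) ⟨k - 1, by omega⟩) k t' = 0 →
          t' = t) ∧
        t ≤ |θ|) ∧
    (m : ℝ) ≤ |θ| := by
  have hm2 : (2:ℝ) ≤ (m:ℝ) := by exact_mod_cast hm
  have hm0 : (0:ℝ) < (m:ℝ) := by linarith
  set κ := kappa m c with hκdef
  have hκ : 0 < κ := by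
    rw [hκdef, kappa]
    apply div_pos (by positivity) (by linarith)
  set x : Fin m → ℝ := fun i => κ * γ i ^ 2 with hxdef
  have hs : 0 < -θ := neg_pos.2 hθ
  set s := -θ with hsdef
  have hxnn : ∀ i, 0 ≤ x i := fun i => mul_nonneg hκ.le (sq_nonneg _)
  have hpos : ∀ i, 0 < x i + s := fun i => by
    have h := hxnn i; linarith only [h, hs]
  have hP : 0 < ∏ i, (x i + s) := Finset.prod_pos fun i _ => hpos i
  have hsub : ∀ i, κ * γ i ^ 2 - θ = x i + s := fun i => by
    simp only [hxdef, hsdef]; ring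
  rw [gfun, ← hκdef] at hroot
  simp only [hsub] at hroot
  have herase : ∀ i : Fin m, ∏ j ∈ Finset.univ.erase i, (x j + s)
      = (∏ j, (x j + s)) / (x i + s) := by
    intro i
    rw [eq_div_iff (hpos i).ne']
    exact Finset.prod_erase_mul _ _ (Finset.mem_univ i)
  have hsum : ∑ i, γ i ^ 2 * ∏ j ∈ Finset.univ.erase i, (x j + s)
      = (∏ j, (x j + s)) * ∑ i, γ i ^ 2 / (x i + s) := by
    rw [Finset.mul_sum]
    refine Finset.sum_congr rfl fun i _ => ?_
    rw [herase i]
    ring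
  have key0 : -((m:ℝ) + θ) + (κ + (κ+1)/(m:ℝ) * θ) * ∑ i, γ i ^ 2 / (x i + s) = 0 := by
    have h0 : (∏ j, (x j + s)) *
        (-((m:ℝ) + θ) + (κ + (κ+1)/(m:ℝ) * θ) * ∑ i, γ i ^ 2 / (x i + s)) = 0 := by
      calc (∏ j, (x j + s)) *
          (-((m:ℝ) + θ) + (κ + (κ+1)/(m:ℝ) * θ) * ∑ i, γ i ^ 2 / (x i + s))
          = -((m:ℝ) + θ) * ∏ i, (x i + s) +
            (κ + (κ+1)/(m:ℝ) * θ) * ((∏ j, (x j + s)) * ∑ i, γ i ^ 2 / (x i + s)) := by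
            ring
        _ = 0 := by rw [← hsum]; exact hroot
    rcases mul_eq_zero.1 h0 with h | h
    · exact absurd h hP.ne'
    · exact h
  set τ := (κ + 1) / ((m:ℝ) * κ) with hτdef
  set T := ∑ i, x i / (x i + s) with hTdef
  have hmne : (m:ℝ) ≠ 0 := hm0.ne'
  have hκne : κ ≠ 0 := hκ.ne'
  have hτm : τ * ((m:ℝ) * κ) = κ + 1 := div_mul_cancel₀ _ (by positivity)
  have hTκ : T = κ * ∑ i, γ i ^ 2 / (x i + s) := by
    rw [hTdef, Finset.mul_sum]
    refine Finset.sum_congr rfl fun i _ => ?_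
    simp only [hxdef]
    ring
  have hθs : θ = -s := by rw [hsdef]; ring
  have key : (m:ℝ) - s = (1 - τ * s) * T := by
    have h1 : (1 - τ * s) * κ = κ + (κ+1)/(m:ℝ) * θ := by
      rw [hτdef, hθs]; field_simp; ring
    calc (m:ℝ) - s = (m:ℝ) + θ := by rw [hθs]; ring
      _ = (κ + (κ+1)/(m:ℝ) * θ) * ∑ i, γ i ^ 2 / (x i + s) := by linarith only [key0]
      _ = (1 - τ * s) * (κ * ∑ i, γ i ^ 2 / (x i + s)) := by rw [← h1]; ring
      _ = (1 - τ * s) * T := by rw [hTκ]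
  have hTnn : 0 ≤ T := Finset.sum_nonneg fun i _ => div_nonneg (hxnn i) (hpos i).le
  have hne : (Finset.univ : Finset (Fin m)).Nonempty := by
    refine ⟨⟨0, by omega⟩, Finset.mem_univ _⟩
  have hTlt : T < m := by
    have h1 : ∀ i ∈ Finset.univ, x i / (x i + s) < 1 := fun i _ =>
      (div_lt_one (hpos i)).2 (by have h := hxnn i; linarith only [h, hs])
    calc T < ∑ _i : Fin m, (1:ℝ) := Finset.sum_lt_sum_of_nonempty hne h1
      _ = m := by simp
  have hsm : (m:ℝ) ≤ s := by
    by_contra hcon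
    push_neg at hcon
    rcases le_or_gt (1 - τ * s) 0 with h1 | h1
    · have h2 := mul_nonpos_of_nonpos_of_nonneg h1 hTnn
      linarith only [key, h2, hcon]
    · have h2 : (1 - τ * s) * T ≤ (1 - τ * s) * m := by
        exact mul_le_mul_of_nonneg_left hTlt.le h1.le
      have h3 : τ * s * (m:ℝ) ≤ s := by linarith only [key, h2]
      have h4 := mul_le_mul_of_nonneg_right h3 hκ.le
      have h5 : τ * s * (m:ℝ) * κ = s * (κ + 1) := by linear_combination s * hτm
      linarith only [h4, h5, hs]
  have habs : |θ| = s := abs_of_neg hθ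
  constructor
  · intro k hk1 hk2
    have ha : k - 1 < m := by omega
    set x₀ := sortedVal m x ⟨k - 1, ha⟩ with hx₀def
    have hx₀nn : 0 ≤ x₀ := hxnn _
    have hx₀s : 0 < x₀ + s := by linarith only [hx₀nn, hs]
    have hmono := Tuple.monotone_sort x
    have hsum_ge : ((m:ℝ) + 1 - k) * (x₀ / (x₀ + s)) ≤ T := by
      have e1 : T = ∑ j, x (Tuple.sort x j) / (x (Tuple.sort x j) + s) := by
        rw [hTdef]
        exact (Equiv.sum_comp (Tuple.sort x) (fun i => x i / (x i + s))).symm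
      have e2 : ∑ j ∈ Finset.Ici (⟨k - 1, ha⟩ : Fin m), x₀ / (x₀ + s)
          ≤ ∑ j ∈ Finset.Ici (⟨k - 1, ha⟩ : Fin m),
              x (Tuple.sort x j) / (x (Tuple.sort x j) + s) := by
        refine Finset.sum_le_sum fun j hj => ?_
        have hle : x₀ ≤ x (Tuple.sort x j) := hmono (Finset.mem_Ici.1 hj)
        exact auxDiv hs hx₀nn hle
      have e3 : ∑ j ∈ Finset.Ici (⟨k - 1, ha⟩ : Fin m), x₀ / (x₀ + s)
          = ((m - (k - 1) : ℕ) : ℝ) * (x₀ / (x₀ + s)) := by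
        rw [Finset.sum_const, Fin.card_Ici, nsmul_eq_mul]
      have e4 : ((m - (k - 1) : ℕ) : ℝ) = (m:ℝ) + 1 - k := by
        have hk1' : 1 ≤ k := hk1
        rw [Nat.cast_sub (by omega), Nat.cast_sub (by omega : 1 ≤ k)]
        push_cast
        ring
      have e5 : ∑ j ∈ Finset.Ici (⟨k - 1, ha⟩ : Fin m),
          x (Tuple.sort x j) / (x (Tuple.sort x j) + s)
          ≤ ∑ j, x (Tuple.sort x j) / (x (Tuple.sort x j) + s) :=
        Finset.sum_le_sum_of_subset_of_nonneg (Finset.subset_univ _)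
          (fun j _ _ => div_nonneg (hxnn _) (hpos _).le)
      rw [e1]
      calc ((m:ℝ) + 1 - k) * (x₀ / (x₀ + s))
          = ((m - (k - 1) : ℕ) : ℝ) * (x₀ / (x₀ + s)) := by rw [e4]
        _ = ∑ j ∈ Finset.Ici (⟨k - 1, ha⟩ : Fin m), x₀ / (x₀ + s) := e3.symm
        _ ≤ _ := e2.trans e5
    have hT' : ((m:ℝ) + 1 - k) * x₀ ≤ T * (x₀ + s) := by
      have h1 := mul_le_mul_of_nonneg_right hsum_ge hx₀s.le
      rwa [mul_assoc, div_mul_cancel₀ _ hx₀s.ne'] at h1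
    have hτpos : 0 < τ := by rw [hτdef]; positivity
    have hτs : 0 < τ * s - 1 := by
      have h1 : τ * (m:ℝ) ≤ τ * s := mul_le_mul_of_nonneg_left hsm hτpos.le
      have h2 := mul_le_mul_of_nonneg_right h1 hκ.le
      exact auxGt hκ (by linarith only [h2, hτm])
    have key' : s - (m:ℝ) = (τ * s - 1) * T := by linarith only [key]
    set q := ((k:ℝ) - 1) * x₀ with hqdef
    set b := (m:ℝ) - x₀ + ((m:ℝ) + 1 - (k:ℝ)) * τ * x₀ with hbdef
    clear_value q b
    have hkR : (1:ℝ) ≤ (k:ℝ) := by exact_mod_cast hk1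
    have hqnn : 0 ≤ q := by
      rw [hqdef]; exact mul_nonneg (by linarith) hx₀nn
    have hquad_eq : ∀ u : ℝ, hquad m κ x₀ k u = u ^ 2 - b * u - q := by
      intro u
      simp only [hquad]
      rw [← hτdef, hqdef, hbdef]
      ring
    have hhs : 0 ≤ s ^ 2 - b * s - q := by
      have e : s ^ 2 - b * s - q
          = (s - m) * (x₀ + s) - ((m:ℝ) + 1 - k) * (τ * s - 1) * x₀ := by
        rw [hbdef, hqdef]; ring
      rw [e, key']
      have h1 := mul_le_mul_of_nonneg_left hT' hτs.le
      linarith only [h1]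
    have hDnn : (0:ℝ) ≤ b ^ 2 + 4 * q := by linarith only [sq_nonneg b, hqnn]
    set t := (b + Real.sqrt (b ^ 2 + 4 * q)) / 2 with htdef
    clear_value t
    have hsq : Real.sqrt (b ^ 2 + 4 * q) ^ 2 = b ^ 2 + 4 * q := Real.sq_sqrt hDnn
    have hquadt : hquad m κ x₀ k t = 0 := by
      rw [hquad_eq, htdef]
      linear_combination hsq / 4
    have ht2 : t ^ 2 - b * t - q = 0 := by rw [← hquad_eq]; exact hquadt
    have ht0 : 0 < t := by
      rcases lt_or_ge 0 q with hq | hq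
      · have h1 : |b| < Real.sqrt (b ^ 2 + 4 * q) := by
          rw [← Real.sqrt_sq_eq_abs]
          exact Real.sqrt_lt_sqrt (sq_nonneg b) (by linarith)
        have h2 := neg_abs_le b
        rw [htdef]; linarith only [h1, h2]
      · have hq0 : q = 0 := le_antisymm hq hqnn
        have hb : 0 < b := by
          have hq0' : ((k:ℝ) - 1) * x₀ = 0 := by rw [← hqdef]; exact hq0
          rcases mul_eq_zero.1 hq0' with h | h
          · have hk : (k:ℝ) = 1 := by linarith only [h]
            have h6 : 0 < τ * (m:ℝ) - 1 := auxGt hκ (by linarith only [hτm])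
            have h7 : 0 ≤ x₀ * (τ * (m:ℝ) - 1) :=
              mul_nonneg hx₀nn (by linarith only [h6])
            rw [hbdef, hk]
            linarith only [h7, hm0]
          · rw [hbdef, h]
            linarith only [hm0]
        have h1 : b ≤ Real.sqrt (b ^ 2 + 4 * q) := by
          calc b ≤ |b| := le_abs_self b
            _ = Real.sqrt (b ^ 2) := (Real.sqrt_sq_eq_abs b).symm
            _ ≤ _ := Real.sqrt_le_sqrt (by linarith)
        rw [htdef]; linarith only [h1, hb]
    have htb : 0 ≤ t - b := auxRootGe ht2 hqnn ht0
    refine ⟨t, ⟨ht0, hquadt⟩, ?_, ?_⟩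
    · intro t' ht'0 ht'
      have ht'2 : t' ^ 2 - b * t' - q = 0 := by rw [← hquad_eq]; exact ht'
      have hfac : (t' - t) * (t' + t - b) = 0 := by linear_combination ht'2 - ht2
      rcases mul_eq_zero.1 hfac with h | h
      · linarith only [h]
      · exfalso; linarith only [h, htb, ht'0]
    · rw [habs]
      by_contra hcc
      push_neg at hcc
      have hstb : 0 < s + t - b := by linarith only [htb, hs]
      have hp := mul_pos (sub_pos.2 hcc) hstb
      linarith only [hp, hhs, ht2]
  · rw [habs]; exact hsm
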